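/- Let f : ℝⁿ → ℝ be differentiable with L-Lipschitz gradient, h convex, σ ∈ (0,1), and for x with g = ∇f(x) define x(t) = prox_{th}(x - tg) and G_t(x) = (x - x(t))/t. If 0 < t ≤ 2(1-σ)/L, then f(x(t)) + h(x(t)) ≤ f(x) + h(x) - σt‖G_t(x)‖². -/

import Mathlib

open RealInnerProductSpace

/-- Descent lemma: quadratic upper bound for a function with Lipschitz gradient. -/
lemma descent_lemma {n : ℕ} (f : EuclideanSpace ℝ (Fin n) → ℝ) (L : ℝ)
    (hf : Differentiable ℝ f)
    (hlip : ∀ y z, ‖gradient f y - gradient f z‖ ≤ L * ‖y - z‖)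
    (x y : EuclideanSpace ℝ (Fin n)) :
    f y ≤ f x + ⟪gradient f x, y - x⟫ + L / 2 * ‖y - x‖ ^ 2 := by
  set v := y - x with hv
  set φ : ℝ → ℝ := fun s => f (x + s • v) - s * ⟪gradient f x, v⟫ - L / 2 * s ^ 2 * ‖v‖ ^ 2
    with hφ
  have hderiv : ∀ s : ℝ, HasDerivAt φ
      (⟪gradient f (x + s • v), v⟫ - ⟪gradient f x, v⟫ - L * s * ‖v‖ ^ 2) s := by
    intro s
    have hc : HasDerivAt (fun s : ℝ => x + s • v) v s := by
      simpa using ((hasDerivAt_id s).smul_const v).const_add x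
    have hg : HasGradientAt f (gradient f (x + s • v)) (x + s • v) :=
      (hf _).hasGradientAt
    have hF : HasFDerivAt f (InnerProductSpace.toDual ℝ _ (gradient f (x + s • v)))
        (x + s • v) := hasGradientAt_iff_hasFDerivAt.mp hg
    have h1 : HasDerivAt (fun s : ℝ => f (x + s • v)) ⟪gradient f (x + s • v), v⟫ s := by
      have := hF.comp_hasDerivAt s hc
      simp only [InnerProductSpace.toDual_apply_apply] at this
      exact this
    have h2 : HasDerivAt (fun s : ℝ => s * ⟪gradient f x, v⟫) ⟪gradient f x, v⟫ s := by
      simpa using (hasDerivAt_id s).mul_const (⟪gradient f x, v⟫)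
    have h3 : HasDerivAt (fun s : ℝ => L / 2 * s ^ 2 * ‖v‖ ^ 2) (L * s * ‖v‖ ^ 2) s := by
      have := ((hasDerivAt_pow 2 s).const_mul (L / 2)).mul_const (‖v‖ ^ 2)
      exact this.congr_deriv (by rw [show (2:ℕ) - 1 = 1 from rfl, pow_one]; push_cast; ring)
    exact (h1.sub h2).sub h3
  have key : φ 1 ≤ φ 0 := by
    have : AntitoneOn φ (Set.Icc 0 1) := by
      apply antitoneOn_of_deriv_nonpos (convex_Icc 0 1)
      · exact fun s _ => (hderiv s).differentiableAt.continuousAt.continuousWithinAt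
      · intro s _
        exact (hderiv s).differentiableAt.differentiableWithinAt
      · intro s hs
        rw [interior_Icc] at hs
        rw [(hderiv s).deriv]
        have hcs : ⟪gradient f (x + s • v) - gradient f x, v⟫ ≤ L * s * ‖v‖ ^ 2 := by
          calc ⟪gradient f (x + s • v) - gradient f x, v⟫
              ≤ ‖gradient f (x + s • v) - gradient f x‖ * ‖v‖ :=
                real_inner_le_norm _ _
            _ ≤ (L * ‖(x + s • v) - x‖) * ‖v‖ :=
                mul_le_mul_of_nonneg_right (hlip _ _) (norm_nonneg v)
            _ = L * s * ‖v‖ ^ 2 := by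
                simp [norm_smul, abs_of_nonneg hs.1.le]; ring
        have := inner_sub_left (𝕜 := ℝ) (gradient f (x + s • v)) (gradient f x) v
        linarith [hcs, this.symm]
    exact this (by simp) (by simp) zero_le_one
  have h0 : φ 0 = f x := by simp [hφ]
  have h1 : φ 1 = f y - ⟪gradient f x, v⟫ - L / 2 * ‖v‖ ^ 2 := by
    simp [hφ, hv]
  rw [h0, h1] at key
  linarith

/-- sufficient decrease of the proximal gradient step: for
0 < t ≤ 2(1-σ)/L, ψ(x(t)) ≤ ψ(x) - σt‖G_t(x)‖², where
x(t) = prox_{th}(x - t∇f(x)) and G_t(x) = (x - x(t))/t. -/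
theorem stmt_8 {n : ℕ} (f h : EuclideanSpace ℝ (Fin n) → ℝ)
    (L σ : ℝ) (hL : 0 < L) (hσ : σ ∈ Set.Ioo (0 : ℝ) 1)
    (hf : Differentiable ℝ f)
    (hlip : ∀ y z, ‖gradient f y - gradient f z‖ ≤ L * ‖y - z‖)
    (hconv : ConvexOn ℝ Set.univ h)
    (x xt : EuclideanSpace ℝ (Fin n)) (t : ℝ)
    (ht0 : 0 < t) (ht : t ≤ 2 * (1 - σ) / L)
    (hxt : ∀ u, h xt + 1 / (2 * t) * ‖xt - (x - t • gradient f x)‖ ^ 2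
            ≤ h u + 1 / (2 * t) * ‖u - (x - t • gradient f x)‖ ^ 2) :
    f xt + h xt ≤ f x + h x - σ * t * ‖(1 / t) • (x - xt)‖ ^ 2 := by
  set g := gradient f x with hg
  set y := x - t • g with hy
  set w := x - xt with hw
  -- the prox/convexity inequality for each λ ∈ (0,1]
  have hsub : ∀ l : ℝ, 0 < l → l ≤ 1 →
      h xt ≤ h x + (1 / t) * ⟪xt - y, w⟫ + (l / (2 * t)) * ‖w‖ ^ 2 := by
    intro l hl0 hl1
    have hu : xt + l • w = (1 - l) • xt + l • x := by
      rw [sub_smul, one_smul, hw, smul_sub]; abel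
    have hcv : h (xt + l • w) ≤ (1 - l) * h xt + l * h x := by
      rw [hu]
      exact hconv.2 (Set.mem_univ xt) (Set.mem_univ x) (by linarith) hl0.le (by ring)
    have hq : ‖xt + l • w - y‖ ^ 2
        = ‖xt - y‖ ^ 2 + 2 * (l * ⟪xt - y, w⟫) + l ^ 2 * ‖w‖ ^ 2 := by
      have : xt + l • w - y = (xt - y) + l • w := by abel
      rw [this, norm_add_sq_real, real_inner_smul_right, norm_smul,
        Real.norm_eq_abs, abs_of_pos hl0]; ring
    have hp := hxt (xt + l • w)
    rw [hq] at hp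
    have h2t : (0 : ℝ) < 2 * t := by linarith
    have hexp : 1 / (2 * t) * (‖xt - y‖ ^ 2 + 2 * (l * ⟪xt - y, w⟫) + l ^ 2 * ‖w‖ ^ 2)
        = 1 / (2 * t) * ‖xt - y‖ ^ 2 + l * ((1 / t) * ⟪xt - y, w⟫)
          + l * ((l / (2 * t)) * ‖w‖ ^ 2) := by
      field_simp
    rw [hexp] at hp
    have hl' : l * h xt ≤ l * (h x + (1 / t) * ⟪xt - y, w⟫ + (l / (2 * t)) * ‖w‖ ^ 2) := by
      have hrhs : l * (h x + (1 / t) * ⟪xt - y, w⟫ + (l / (2 * t)) * ‖w‖ ^ 2)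
          = l * h x + l * ((1 / t) * ⟪xt - y, w⟫) + l * ((l / (2 * t)) * ‖w‖ ^ 2) := by ring
      rw [hrhs]
      linarith [hp, hcv]
    exact le_of_mul_le_mul_left (by linarith [hl']) hl0
  -- pass to the limit λ → 0
  have hsub0 : h xt ≤ h x + (1 / t) * ⟪xt - y, w⟫ := by
    apply le_of_forall_pos_le_add
    intro ε hε
    by_cases hw0 : ‖w‖ ^ 2 = 0
    · have := hsub 1 one_pos le_rfl
      rw [hw0] at this
      linarith
    · have hwpos : 0 < ‖w‖ ^ 2 := lt_of_le_of_ne (by positivity) (Ne.symm hw0)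
      set l := min 1 (2 * t * ε / ‖w‖ ^ 2) with hl
      have hl0 : 0 < l := lt_min one_pos (by positivity)
      have := hsub l hl0 (min_le_left _ _)
      have hle : (l / (2 * t)) * ‖w‖ ^ 2 ≤ ε := by
        have h1 : l ≤ 2 * t * ε / ‖w‖ ^ 2 := min_le_right _ _
        rw [div_mul_eq_mul_div, div_le_iff₀ (by linarith)]
        calc l * ‖w‖ ^ 2 ≤ (2 * t * ε / ‖w‖ ^ 2) * ‖w‖ ^ 2 := by
              exact mul_le_mul_of_nonneg_right h1 hwpos.le
          _ = ε * (2 * t) := by rw [div_mul_cancel₀ _ hwpos.ne']; ring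
      linarith
  -- compute the inner product
  have hinner : ⟪xt - y, w⟫ = -‖w‖ ^ 2 + t * ⟪g, w⟫ := by
    have : xt - y = -w + t • g := by rw [hy, hw]; abel
    rw [this, inner_add_left, inner_neg_left, real_inner_smul_left,
      real_inner_self_eq_norm_sq]
  rw [hinner] at hsub0
  -- descent lemma
  have hdesc := descent_lemma f L hf hlip x xt
  have hxtx : xt - x = -w := by rw [hw]; abel
  rw [hxtx] at hdesc
  rw [inner_neg_right, norm_neg] at hdesc
  -- the norm of the gradient mapping
  have hnorm : ‖(1 / t) • w‖ ^ 2 = (1 / t) ^ 2 * ‖w‖ ^ 2 := by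
    rw [norm_smul, mul_pow, Real.norm_eq_abs, sq_abs]
  rw [hnorm]
  -- the coefficient inequality
  have hLt : t * L ≤ 2 * (1 - σ) := (le_div_iff₀ hL).mp ht
  have hcoef : (L / 2 - 1 / t + σ * t * (1 / t) ^ 2) ≤ 0 := by
    have h2 : L / 2 - 1 / t + σ * t * (1 / t) ^ 2 = (t * L - 2 + 2 * σ) / (2 * t) := by
      field_simp
    rw [h2]
    exact div_nonpos_of_nonpos_of_nonneg (by linarith) (by linarith)
  have hprod : (L / 2 - 1 / t + σ * t * (1 / t) ^ 2) * ‖w‖ ^ 2 ≤ 0 :=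
    mul_nonpos_of_nonpos_of_nonneg hcoef (by positivity)
  have h1t : (1 / t) * (-‖w‖ ^ 2 + t * ⟪g, w⟫) = -(1 / t) * ‖w‖ ^ 2 + ⟪g, w⟫ := by
    field_simp
  rw [h1t] at hsub0
  rw [← hg] at hdesc
  have hprod' : L / 2 * ‖w‖ ^ 2 - (1 / t) * ‖w‖ ^ 2 + σ * t * ((1 / t) ^ 2 * ‖w‖ ^ 2) ≤ 0 := by
    linear_combination hprod
  linarith [hsub0, hdesc, hprod']
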